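/- arXiv:1407.5335 — 2 statements merged into one kernel-verified Lean document; each statement's English description precedes it below -/
import Mathlib

section
/- Let V be a complex vector space equipped with a symmetric bilinear form B, let k ∈ ℂ, and let δ, α, γ ∈ V satisfy B(δ,δ) = 0, B(α,α) = B(δ,α)², and B(γ,γ) = B(δ,γ)². Set h := k·δ − B(α,δ)·γ − B(γ,δ)·α. If B(h,δ) = 2 and B(h,α) = 0, then: (i) B(δ,α)·B(δ,γ) = −1 (in particular B(δ,α) ≠ 0 and B(δ,γ) ≠ 0); (ii) B(α,γ) = k + 1; (iii) B(h,γ) = 0; and (iv) B(h,h) = 2k. -/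
/-- The algebraic core of the classification of embeddings of
`sl₂`-hat of level `k` in a lattice vertex algebra (Theorem 2.2 of the paper).
`B` is a symmetric bilinear form on a complex vector space `V`. -/
theorem wakimoto_gram_classification
    (V : Type*) [AddCommGroup V] [Module ℂ V]
    (B : V →ₗ[ℂ] V →ₗ[ℂ] ℂ) (hB : ∀ v w : V, B v w = B w v)
    (k : ℂ) (δ α γ : V)
    (hδδ : B δ δ = 0)
    (hαα : B α α = (B δ α) ^ 2)
    (hγγ : B γ γ = (B δ γ) ^ 2)
    (h : V) (hdef : h = k • δ - (B α δ) • γ - (B γ δ) • α)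
    (hhδ : B h δ = 2) (hhα : B h α = 0) :
    B δ α * B δ γ = -1 ∧ B δ α ≠ 0 ∧ B δ γ ≠ 0 ∧
      B α γ = k + 1 ∧ B h γ = 0 ∧ B h h = 2 * k := by
  have hαδ : B α δ = B δ α := hB α δ
  have hγδ : B γ δ = B δ γ := hB γ δ
  have hγα : B γ α = B α γ := hB γ α
  simp only [hdef, map_sub, map_smul, LinearMap.sub_apply, LinearMap.smul_apply,
    smul_eq_mul, hδδ, hαα, hγγ, hαδ, hγδ, hγα] at hhδ hhα ⊢
  have hac : B δ α * B δ γ = -1 := by linear_combination (-1/2) * hhδ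
  have ha : B δ α ≠ 0 := by
    intro h0; rw [h0] at hac; simp at hac
  have hc : B δ γ ≠ 0 := by
    intro h0; rw [h0] at hac; simp at hac
  have hx : B α γ = k + 1 := by
    linear_combination (B δ γ) * hhα + (B α γ - k + B δ α * B δ γ - 1) * hac
  have hy : k * B δ γ - B δ α * B δ γ ^ 2 - B δ γ * B α γ = 0 := by
    linear_combination (-(B δ γ)) * hac - (B δ γ) * hx
  refine ⟨hac, ha, hc, hx, hy, ?_⟩
  linear_combination k * hhδ - (B δ α) * hy - (B δ γ) * hhα
end

section
/- Fix c ∈ ℂ and let B be the commutative ℂ-algebra ℂ[x, y, t; q, q⁻¹] of polynomials in three countable families of variables x = (x₁, x₂, …), y = (y₁, y₂, …), t = (t₁, t₂, …) tensored with Laurent polynomials in q. Define ℂ-linear operators on B: for n ≥ 1, α_{(n)} := ∂_{x_n} + c∂_{y_n} + ∂_{t_n}, α_{(−n)} := multiplication by n·x_n, and α_{(0)} := q∂_q; γ_{(n)} := c∂_{x_n} + ∂_{y_n} − ∂_{t_n}, γ_{(−n)} := multiplication by n·y_n, and γ_{(0)} := −q∂_q; δ_{(n)} := ∂_{x_n}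 − ∂_{y_n}, δ_{(−n)} := multiplication by n·t_n, and δ_{(0)} := 0. Then for all a, b ∈ {α, γ, δ} and all m, n ∈ ℤ, the commutator satisfies [a_{(m)}, b_{(n)}] = m·δ_{m,−n}·(a|b)·id_B, where the pairing is (α|α) = (γ|γ) = 1, (α|γ) = (γ|α) = c, (δ|α) = (α|δ) = 1, (δ|γ) = (γ|δ) = −1, and (δ|δ) = 0. -/
open MvPolynomial TensorProduct

noncomputable section

/-- The index set of the variables: `(0, n) ↦ x_{n+1}`, `(1, n) ↦ y_{n+1}`,
`(2, n) ↦ t_{n+1}` (so the second component `n : ℕ` encodes the subscript `n+1`). -/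
abbrev BosVar : Type := Fin 3 × ℕ

/-- The bosonic Fock space `B = ℂ[x, y, t; q, q⁻¹]`: polynomials in the three
countable families `x`, `y`, `t` tensored with Laurent polynomials in `q`. -/
abbrev BosFock : Type := MvPolynomial BosVar ℂ ⊗[ℂ] LaurentPolynomial ℂ

/-- A linear operator on the polynomial factor, extended to `B`. -/
def onPoly (f : MvPolynomial BosVar ℂ →ₗ[ℂ] MvPolynomial BosVar ℂ) :
    Module.End ℂ BosFock :=
  LinearMap.rTensor (LaurentPolynomial ℂ) f

/-- A linear operator on the Laurent polynomial factor, extended to `B`. -/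
def onLaurent (g : LaurentPolynomial ℂ →ₗ[ℂ] LaurentPolynomial ℂ) :
    Module.End ℂ BosFock :=
  LinearMap.lTensor (MvPolynomial BosVar ℂ) g

/-- The Euler operator `q∂_q` on Laurent polynomials: `qⁿ ↦ n·qⁿ`. -/
def eulerOp : LaurentPolynomial ℂ →ₗ[ℂ] LaurentPolynomial ℂ :=
  (AddMonoidAlgebra.coeffLinearEquiv ℂ).symm.toLinearMap ∘ₗ
    (Finsupp.lsum ℂ fun n : ℤ => (n : ℂ) • Finsupp.lsingle n) ∘ₗ
    (AddMonoidAlgebra.coeffLinearEquiv ℂ).toLinearMap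

/-- The modes `α_{(m)}`: `α_{(n)} = ∂_{x_n} + c∂_{y_n} + ∂_{t_n}`,
`α_{(−n)} = n·x_n·`, `α_{(0)} = q∂_q` (for `n > 0`). -/
def alphaMode (c : ℂ) : ℤ → Module.End ℂ BosFock
  | Int.ofNat 0 => onLaurent eulerOp
  | Int.ofNat (n + 1) => onPoly
      ((pderiv (0, n)).toLinearMap + c • (pderiv (1, n)).toLinearMap
        + (pderiv (2, n)).toLinearMap)
  | Int.negSucc n => onPoly (LinearMap.mulLeft ℂ (((n + 1 : ℕ) : ℂ) • X (0, n)))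

/-- The modes `γ_{(m)}`: `γ_{(n)} = c∂_{x_n} + ∂_{y_n} − ∂_{t_n}`,
`γ_{(−n)} = n·y_n·`, `γ_{(0)} = −q∂_q` (for `n > 0`). -/
def gammaMode (c : ℂ) : ℤ → Module.End ℂ BosFock
  | Int.ofNat 0 => -onLaurent eulerOp
  | Int.ofNat (n + 1) => onPoly
      (c • (pderiv (0, n)).toLinearMap + (pderiv (1, n)).toLinearMap
        - (pderiv (2, n)).toLinearMap)
  | Int.negSucc n => onPoly (LinearMap.mulLeft ℂ (((n + 1 : ℕ) : ℂ) • X (1, n)))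

/-- The modes `δ_{(m)}`: `δ_{(n)} = ∂_{x_n} − ∂_{y_n}`, `δ_{(−n)} = n·t_n·`,
`δ_{(0)} = 0` (for `n > 0`). -/
def deltaMode : ℤ → Module.End ℂ BosFock
  | Int.ofNat 0 => 0
  | Int.ofNat (n + 1) => onPoly
      ((pderiv (0, n)).toLinearMap - (pderiv (1, n)).toLinearMap)
  | Int.negSucc n => onPoly (LinearMap.mulLeft ℂ (((n + 1 : ℕ) : ℂ) • X (2, n)))

/-- The three families of modes, indexed by `0 ↦ α`, `1 ↦ γ`, `2 ↦ δ`. -/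
def bosMode (c : ℂ) : Fin 3 → ℤ → Module.End ℂ BosFock :=
  ![alphaMode c, gammaMode c, deltaMode]

/-- The pairing `(·|·)` on `{α, γ, δ}`: `(α|α) = (γ|γ) = 1`, `(α|γ) = c`,
`(δ|α) = 1`, `(δ|γ) = −1`, `(δ|δ) = 0`. -/
def bosPair (c : ℂ) : Fin 3 → Fin 3 → ℂ :=
  fun i j => !![1, c, 1; c, 1, -1; 1, -1, 0] i j


lemma onPoly_lie (f g : Module.End ℂ (MvPolynomial BosVar ℂ)) :
    ⁅onPoly f, onPoly g⁆ = onPoly ⁅f, g⁆ := by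
  simp only [onPoly, LieRing.of_associative_ring_bracket, LinearMap.rTensor_sub,
    Module.End.mul_eq_comp, LinearMap.rTensor_comp]

lemma onPoly_onLaurent_comm (f : Module.End ℂ (MvPolynomial BosVar ℂ))
    (g : Module.End ℂ (LaurentPolynomial ℂ)) : ⁅onPoly f, onLaurent g⁆ = 0 := by
  rw [LieRing.of_associative_ring_bracket, sub_eq_zero, Module.End.mul_eq_comp,
    Module.End.mul_eq_comp]
  show LinearMap.rTensor _ f ∘ₗ LinearMap.lTensor _ g = LinearMap.lTensor _ g ∘ₗ LinearMap.rTensor _ f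
  rw [LinearMap.rTensor_comp_lTensor, LinearMap.lTensor_comp_rTensor]

lemma onLaurent_onPoly_comm (f : Module.End ℂ (MvPolynomial BosVar ℂ))
    (g : Module.End ℂ (LaurentPolynomial ℂ)) : ⁅onLaurent g, onPoly f⁆ = 0 := by
  rw [show ⁅onLaurent g, onPoly f⁆ = -⁅onPoly f, onLaurent g⁆ by rw [LieRing.of_associative_ring_bracket, LieRing.of_associative_ring_bracket]; abel, onPoly_onLaurent_comm]; exact LinearMap.ext fun _ => neg_zero

lemma onPoly_smul_one (a : ℂ) : onPoly (a • 1) = a • 1 := by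
  simp only [onPoly, LinearMap.rTensor_smul, Module.End.one_eq_id, LinearMap.rTensor_id]

lemma onPoly_zero : onPoly 0 = 0 := LinearMap.rTensor_zero _

lemma lie_pderiv_mulLeft (v w : BosVar) :
    ⁅((pderiv v).toLinearMap : Module.End ℂ (MvPolynomial BosVar ℂ)),
        LinearMap.mulLeft ℂ (X w : MvPolynomial BosVar ℂ)⁆
      = if v = w then (1 : Module.End ℂ (MvPolynomial BosVar ℂ)) else 0 := by
  rcases eq_or_ne v w with h | h
  · subst h
    ext p
    simp [LieRing.of_associative_ring_bracket, pderiv_mul]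
  · ext p
    simp [LieRing.of_associative_ring_bracket, pderiv_mul, h, pderiv_X_of_ne (Ne.symm h)]

lemma lie_mulLeft_pderiv (v w : BosVar) :
    ⁅(LinearMap.mulLeft ℂ (X w : MvPolynomial BosVar ℂ) : Module.End ℂ (MvPolynomial BosVar ℂ)),
        ((pderiv v).toLinearMap : Module.End ℂ (MvPolynomial BosVar ℂ))⁆
      = -if v = w then (1 : Module.End ℂ (MvPolynomial BosVar ℂ)) else 0 := by
  rw [← lie_pderiv_mulLeft, LieRing.of_associative_ring_bracket, LieRing.of_associative_ring_bracket]; abel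

lemma lie_pderiv_pderiv (v w : BosVar) :
    ⁅((pderiv v).toLinearMap : Module.End ℂ (MvPolynomial BosVar ℂ)),
        ((pderiv w).toLinearMap : Module.End ℂ (MvPolynomial BosVar ℂ))⁆
      = (0 : Module.End ℂ (MvPolynomial BosVar ℂ)) := by
  rcases eq_or_ne v w with h | h
  · subst h; rw [LieRing.of_associative_ring_bracket, sub_self]
  rw [LieRing.of_associative_ring_bracket, sub_eq_zero]
  refine LinearMap.ext fun p => ?_
  induction p using MvPolynomial.induction_on' with
  | add p q hp hq => simp_all
  | monomial s a =>
    simp only [Module.End.mul_eq_comp, LinearMap.comp_apply, Derivation.coeFn_coe,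
      pderiv_monomial, Finsupp.tsub_apply, Finsupp.single_eq_of_ne' h,
      Finsupp.single_eq_of_ne' (Ne.symm h), tsub_zero]
    rw [show s - Finsupp.single w 1 - Finsupp.single v 1
        = s - Finsupp.single v 1 - Finsupp.single w 1 by
      ext u; simp [Finsupp.tsub_apply, tsub_right_comm]]
    ring_nf

lemma lie_mulLeft_mulLeft (a b : MvPolynomial BosVar ℂ) :
    ⁅(LinearMap.mulLeft ℂ a : Module.End ℂ (MvPolynomial BosVar ℂ)), LinearMap.mulLeft ℂ b⁆ = 0 := by
  refine LinearMap.ext fun p => ?_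
  simp only [LieRing.of_associative_ring_bracket, LinearMap.sub_apply, Module.End.mul_eq_comp,
    LinearMap.comp_apply, LinearMap.mulLeft_apply, LinearMap.zero_apply]
  ring

lemma mulLeft_smul' (a : ℂ) (p : MvPolynomial BosVar ℂ) :
    LinearMap.mulLeft ℂ (a • p) = a • LinearMap.mulLeft ℂ p := by
  ext q; simp [smul_mul_assoc]

/-- canonical derivative combination -/
def comb (a₀ a₁ a₂ : ℂ) (k : ℕ) : Module.End ℂ (MvPolynomial BosVar ℂ) :=
  a₀ • (pderiv ((0 : Fin 3), k)).toLinearMap + a₁ • (pderiv ((1 : Fin 3), k)).toLinearMap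
    + a₂ • (pderiv ((2 : Fin 3), k)).toLinearMap

lemma alpha_pos (c : ℂ) (n : ℕ) : alphaMode c (Int.ofNat (n + 1)) = onPoly (comb 1 c 1 n) := by
  rw [alphaMode, comb, one_smul, one_smul]

lemma gamma_pos (c : ℂ) (n : ℕ) : gammaMode c (Int.ofNat (n + 1)) = onPoly (comb c 1 (-1) n) := by
  rw [gammaMode, comb]; congr 1; module

lemma delta_pos (n : ℕ) : deltaMode (Int.ofNat (n + 1)) = onPoly (comb 1 (-1) 0 n) := by
  rw [deltaMode, comb]; congr 1; module

lemma pderiv_pderiv_comm (v w : BosVar) (p : MvPolynomial BosVar ℂ) :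
    pderiv v (pderiv w p) = pderiv w (pderiv v p) := by
  rcases eq_or_ne v w with h | h
  · subst h; rfl
  induction p using MvPolynomial.induction_on' with
  | add p q hp hq => simp_all
  | monomial s a =>
    simp only [pderiv_monomial, Finsupp.tsub_apply, Finsupp.single_eq_of_ne' h,
      Finsupp.single_eq_of_ne' (Ne.symm h), tsub_zero]
    rw [show s - Finsupp.single w 1 - Finsupp.single v 1
        = s - Finsupp.single v 1 - Finsupp.single w 1 by
      ext u; simp [Finsupp.tsub_apply, tsub_right_comm]]
    ring_nf

lemma comb_comm (a₀ a₁ a₂ b₀ b₁ b₂ : ℂ) (k l : ℕ) :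
    comb a₀ a₁ a₂ k * comb b₀ b₁ b₂ l = comb b₀ b₁ b₂ l * comb a₀ a₁ a₂ k := by
  refine LinearMap.ext fun p => ?_
  simp only [comb, Module.End.mul_apply, LinearMap.add_apply, LinearMap.smul_apply,
    Derivation.coeFn_coe, map_add, map_smul]
  simp only [pderiv_pderiv_comm ((0 : Fin 3), k), pderiv_pderiv_comm ((1 : Fin 3), k),
    pderiv_pderiv_comm ((2 : Fin 3), k)]
  module

lemma lie_comb_mulLeft (a₀ a₁ a₂ e : ℂ) (k l : ℕ) (w : Fin 3) :
    ⁅comb a₀ a₁ a₂ k, LinearMap.mulLeft ℂ (e • (X (w, l) : MvPolynomial BosVar ℂ))⁆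
      = (if k = l then e * ![a₀, a₁, a₂] w else 0) • 1 := by
  refine LinearMap.ext fun p => ?_
  rcases eq_or_ne k l with h | h
  · subst h
    fin_cases w <;>
      simp [comb, LieRing.of_associative_ring_bracket, pderiv_mul, smul_mul_assoc,
        mul_smul_comm, Prod.ext_iff, smul_smul, smul_add, smul_sub, mul_add] <;>
      module
  · fin_cases w <;>
      simp [comb, LieRing.of_associative_ring_bracket, pderiv_mul, smul_mul_assoc,
        mul_smul_comm, h, Prod.ext_iff, smul_smul, smul_add, smul_sub, mul_add] <;>
      module

lemma fin_mk_two (h : 2 < 3) : (⟨2, h⟩ : Fin 3) = 2 := rfl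

lemma key_pn (c : ℂ) (i j : Fin 3) (k l : ℕ) :
    ⁅bosMode c i (Int.ofNat (k + 1)), bosMode c j (Int.negSucc l)⁆
      = (if k = l then ((k + 1 : ℕ) : ℂ) * bosPair c i j else 0) • (1 : Module.End ℂ BosFock) := by
  fin_cases i <;> fin_cases j <;>
    simp only [bosMode, bosPair, Matrix.cons_val_zero, Matrix.cons_val_one, Matrix.head_cons,
      Matrix.cons_val_two, Matrix.tail_cons, Fin.isValue, Fin.mk_zero, Fin.mk_one, fin_mk_two] <;>
    (first | rw [alpha_pos] | rw [gamma_pos] | rw [delta_pos]) <;>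
    (first | rw [alphaMode] | rw [gammaMode] | rw [deltaMode]) <;>
    rw [onPoly_lie, lie_comb_mulLeft, onPoly_smul_one] <;>
    (rcases eq_or_ne k l with h | h
     · subst h
       norm_num [Matrix.cons_val_two, Matrix.tail_cons]
     · simp [h])

lemma onLaurent_mul_onPoly_comm (f : Module.End ℂ (MvPolynomial BosVar ℂ))
    (g : Module.End ℂ (LaurentPolynomial ℂ)) :
    onLaurent g * onPoly f = onPoly f * onLaurent g := by
  have h := onPoly_onLaurent_comm f g
  rw [LieRing.of_associative_ring_bracket, sub_eq_zero] at h
  exact h.symm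

lemma lie_eq_zero_of_commute {x y : Module.End ℂ BosFock} (h : Commute x y) : ⁅x, y⁆ = 0 := by
  rw [LieRing.of_associative_ring_bracket, h.eq, sub_self]

lemma commuteLP (f : Module.End ℂ (MvPolynomial BosVar ℂ))
    (g : Module.End ℂ (LaurentPolynomial ℂ)) : Commute (onLaurent g) (onPoly f) :=
  onLaurent_mul_onPoly_comm f g

lemma alpha0' (c : ℂ) : alphaMode c (Int.ofNat 0) = (1 : ℂ) • onLaurent eulerOp := by
  rw [alphaMode, one_smul]

lemma gamma0' (c : ℂ) : gammaMode c (Int.ofNat 0) = (-1 : ℂ) • onLaurent eulerOp := by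
  rw [gammaMode]; module

lemma delta0' : deltaMode (Int.ofNat 0) = (0 : ℂ) • onLaurent eulerOp := by
  rw [deltaMode]; module

lemma lie_smul_smul (a b : ℂ) (E : Module.End ℂ BosFock) : ⁅a • E, b • E⁆ = 0 := by
  refine lie_eq_zero_of_commute ?_
  exact ((Commute.refl E).smul_left a).smul_right b

lemma lie_smulL_P (a : ℂ) (g : Module.End ℂ (LaurentPolynomial ℂ))
    (f : Module.End ℂ (MvPolynomial BosVar ℂ)) : ⁅a • onLaurent g, onPoly f⁆ = 0 := by
  rw [LieRing.of_associative_ring_bracket, sub_eq_zero, smul_mul_assoc, mul_smul_comm,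
    onLaurent_mul_onPoly_comm]

lemma lie_P_smulL (a : ℂ) (g : Module.End ℂ (LaurentPolynomial ℂ))
    (f : Module.End ℂ (MvPolynomial BosVar ℂ)) : ⁅onPoly f, a • onLaurent g⁆ = 0 := by
  rw [LieRing.of_associative_ring_bracket, sub_eq_zero, smul_mul_assoc, mul_smul_comm,
    onLaurent_mul_onPoly_comm]

lemma bosPair_symm (c : ℂ) (i j : Fin 3) : bosPair c j i = bosPair c i j := by
  fin_cases i <;> fin_cases j <;>
    simp [bosPair, Matrix.cons_val_zero, Matrix.cons_val_one, Matrix.head_cons,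
      Matrix.cons_val_two, Matrix.tail_cons, Fin.mk_zero, Fin.mk_one, fin_mk_two]

set_option maxHeartbeats 3200000 in
/-- Section 3 of the paper: the displayed operators on the bosonic
Fock space `B = ℂ[x, y, t; q, q⁻¹]` represent the Heisenberg algebra of the fields
`α(z)`, `γ(z)`, `δ(z)`: `[a_{(m)}, b_{(n)}] = m·δ_{m,−n}·(a|b)·id_B`. -/
theorem bosonic_fock_heisenberg (c : ℂ) :
    ∀ (i j : Fin 3) (m n : ℤ),
      ⁅bosMode c i m, bosMode c j n⁆
        = (if m = -n then (m : ℂ) * bosPair c i j else 0) • (1 : Module.End ℂ BosFock) := by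
  intro i j m n
  rcases m with (_ | k) | k <;> rcases n with (_ | l) | l
  · -- (0, 0)
    fin_cases i <;> fin_cases j <;>
      simp only [bosMode, Matrix.cons_val_zero, Matrix.cons_val_one, Matrix.head_cons,
        Matrix.cons_val_two, Matrix.tail_cons, Fin.mk_zero, Fin.mk_one, fin_mk_two] <;>
      (first | rw [alpha0'] | rw [gamma0'] | rw [delta0']) <;>
      (first | rw [alpha0'] | rw [gamma0'] | rw [delta0'] | skip) <;>
      rw [lie_smul_smul] <;> norm_num
  · -- (0, pos)
    fin_cases i <;> fin_cases j <;>
      simp only [bosMode, Matrix.cons_val_zero, Matrix.cons_val_one, Matrix.head_cons,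
        Matrix.cons_val_two, Matrix.tail_cons, Fin.mk_zero, Fin.mk_one, fin_mk_two] <;>
      (first | rw [alpha0'] | rw [gamma0'] | rw [delta0']) <;>
      (first | rw [alpha_pos] | rw [gamma_pos] | rw [delta_pos]) <;>
      rw [lie_smulL_P, if_neg (by simp only [Int.ofNat_eq_coe, Int.negSucc_eq]; omega), zero_smul]
  · -- (0, neg)
    fin_cases i <;> fin_cases j <;>
      simp only [bosMode, Matrix.cons_val_zero, Matrix.cons_val_one, Matrix.head_cons,
        Matrix.cons_val_two, Matrix.tail_cons, Fin.mk_zero, Fin.mk_one, fin_mk_two] <;>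
      (first | rw [alpha0'] | rw [gamma0'] | rw [delta0']) <;>
      (first | rw [alphaMode] | rw [gammaMode] | rw [deltaMode]) <;>
      rw [lie_smulL_P, if_neg (by simp only [Int.ofNat_eq_coe, Int.negSucc_eq]; omega), zero_smul]
  · -- (pos, 0)
    fin_cases i <;> fin_cases j <;>
      simp only [bosMode, Matrix.cons_val_zero, Matrix.cons_val_one, Matrix.head_cons,
        Matrix.cons_val_two, Matrix.tail_cons, Fin.mk_zero, Fin.mk_one, fin_mk_two] <;>
      (first | rw [alpha0'] | rw [gamma0'] | rw [delta0']) <;>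
      (first | rw [alpha_pos] | rw [gamma_pos] | rw [delta_pos]) <;>
      rw [lie_P_smulL, if_neg (by simp only [Int.ofNat_eq_coe, Int.negSucc_eq]; omega), zero_smul]
  · -- (pos, pos)
    fin_cases i <;> fin_cases j <;>
      simp only [bosMode, Matrix.cons_val_zero, Matrix.cons_val_one, Matrix.head_cons,
        Matrix.cons_val_two, Matrix.tail_cons, Fin.mk_zero, Fin.mk_one, fin_mk_two] <;>
      (first | rw [alpha_pos] | rw [gamma_pos] | rw [delta_pos]) <;>
      (first | rw [alpha_pos] | rw [gamma_pos] | rw [delta_pos] | skip) <;>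
      rw [onPoly_lie, LieRing.of_associative_ring_bracket, comb_comm, sub_self, onPoly_zero,
        if_neg (by simp only [Int.ofNat_eq_coe, Int.negSucc_eq]; omega), zero_smul]
  · -- (pos, neg)
    rw [key_pn]
    by_cases h : k = l
    · subst h
      rw [if_pos rfl, if_pos (by simp only [Int.ofNat_eq_coe, Int.negSucc_eq]; omega)]
      push_cast [Int.ofNat_eq_coe]
      module
    · rw [if_neg h, if_neg (by simp only [Int.ofNat_eq_coe, Int.negSucc_eq]; omega), zero_smul]
  · -- (neg, 0)
    fin_cases i <;> fin_cases j <;>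
      simp only [bosMode, Matrix.cons_val_zero, Matrix.cons_val_one, Matrix.head_cons,
        Matrix.cons_val_two, Matrix.tail_cons, Fin.mk_zero, Fin.mk_one, fin_mk_two] <;>
      (first | rw [alpha0'] | rw [gamma0'] | rw [delta0']) <;>
      (first | rw [alphaMode] | rw [gammaMode] | rw [deltaMode]) <;>
      rw [lie_P_smulL, if_neg (by simp only [Int.ofNat_eq_coe, Int.negSucc_eq]; omega), zero_smul]
  · -- (neg, pos)
    rw [show ⁅bosMode c i (Int.negSucc k), bosMode c j (Int.ofNat (l + 1))⁆
        = -⁅bosMode c j (Int.ofNat (l + 1)), bosMode c i (Int.negSucc k)⁆ by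
      rw [LieRing.of_associative_ring_bracket, LieRing.of_associative_ring_bracket]; abel, key_pn, bosPair_symm]
    by_cases h : k = l
    · subst h
      rw [if_pos rfl, if_pos (by simp only [Int.ofNat_eq_coe, Int.negSucc_eq]; omega)]
      rw [Int.cast_negSucc]
      push_cast
      module
    · rw [if_neg (by omega), if_neg (by simp only [Int.ofNat_eq_coe, Int.negSucc_eq]; omega)]
      simp; exact LinearMap.ext fun _ => neg_zero
  · -- (neg, neg)
    fin_cases i <;> fin_cases j <;>
      simp only [bosMode, Matrix.cons_val_zero, Matrix.cons_val_one, Matrix.head_cons,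
        Matrix.cons_val_two, Matrix.tail_cons, Fin.mk_zero, Fin.mk_one, fin_mk_two] <;>
      (first | rw [alphaMode] | rw [gammaMode] | rw [deltaMode]) <;>
      (first | rw [alphaMode] | rw [gammaMode] | rw [deltaMode] | skip) <;>
      rw [onPoly_lie, lie_mulLeft_mulLeft, onPoly_zero,
        if_neg (by simp only [Int.negSucc_eq]; omega), zero_smul]
end
end
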